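/- arXiv:1608.03115 — 3 statements merged into one kernel-verified Lean document; each statement's English description precedes it below -/
import Mathlib

section
/- If x̂ ∈ S is an efficient solution of (P) and both the extended Abadie data qualification (EADQ) and the Maeda objective qualification (MOQ) hold at x̂, then the strong KKT condition holds at x̂. -/
open Set Filter Topology
open scoped RealInnerProductSpace Pointwise

noncomputable section

namespace MOSIP

variable {n : ℕ} {T : Type*} {p : ℕ}

/-- The decision space `ℝ^n`. -/
abbrev Eucl (n : ℕ) := EuclideanSpace ℝ (Fin n)

/-- Subdifferential of a real-valued function. -/
def subdiff (h : Eucl n → ℝ) (x : Eucl n) : Set (Eucl n) :=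
  {ξ | ∀ y, h x + ⟪ξ, y - x⟫ ≤ h y}

/-- Subdifferential of an extended-real-valued function. -/
def subdiffE (h : Eucl n → EReal) (x : Eucl n) : Set (Eucl n) :=
  {ξ | ∀ y, h x + ((⟪ξ, y - x⟫ : ℝ) : EReal) ≤ h y}

/-- Convexity of an extended-real-valued function. -/
def ConvexE (h : Eucl n → EReal) : Prop :=
  ∀ x y : Eucl n, ∀ a b : ℝ, 0 ≤ a → 0 ≤ b → a + b = 1 →
    h (a • x + b • y) ≤ (a : EReal) * h x + (b : EReal) * h y

/-- Proper (with values in `ℝ ∪ {+∞}`): never `−∞` and not identically `+∞`. -/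
def ProperE (h : Eucl n → EReal) : Prop :=
  (∀ x, h x ≠ ⊥) ∧ (∃ x, h x ≠ ⊤)

/-- Feasible set `S` of the problem `(P)`. -/
def feasSet (g : T → Eucl n → EReal) : Set (Eucl n) := {x | ∀ t, g t x ≤ 0}

/-- Active indices `T(x)`. -/
def activeIx (g : T → Eucl n → EReal) (x : Eucl n) : Set T := {t | g t x = 0}

/-- `ε`-active indices `T_ε(x)`. -/
def activeIxEps (g : T → Eucl n → EReal) (x : Eucl n) (ε : ℝ) : Set T :=
  {t | ((-ε : ℝ) : EReal) ≤ g t x}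

/-- `F(xh) = ⋃ i, ∂f_i(xh)`. -/
def FSet (f : Fin p → Eucl n → ℝ) (x : Eucl n) : Set (Eucl n) := ⋃ i, subdiff (f i) x

/-- `G(xh) = ⋃_{t ∈ T(xh)} ∂g_t(xh)`. -/
def GSet (g : T → Eucl n → EReal) (x : Eucl n) : Set (Eucl n) :=
  ⋃ t ∈ activeIx g x, subdiffE (g t) x

/-- The smallest convex cone containing `M` and `0`: all finite nonnegative combinations. -/
def coneHull (M : Set (Eucl n)) : Set (Eucl n) :=
  {x | ∃ (s : Finset (Eucl n)) (c : Eucl n → ℝ), ↑s ⊆ M ∧ (∀ v ∈ s, 0 ≤ c v) ∧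
    x = ∑ v ∈ s, c v • v}

/-- Negative polar cone `M⁰`. -/
def negPolar (M : Set (Eucl n)) : Set (Eucl n) := {d | ∀ ξ ∈ M, ⟪ξ, d⟫ ≤ 0}

/-- Strictly negative polar cone `M⁻`. -/
def strictNegPolar (M : Set (Eucl n)) : Set (Eucl n) := {d | ∀ ξ ∈ M, ⟪ξ, d⟫ < 0}

/-- Contingent (Bouligand tangent) cone of `M` at `x`. -/
def contingentCone (M : Set (Eucl n)) (x : Eucl n) : Set (Eucl n) :=
  {v | ∃ (τ : ℕ → ℝ) (w : ℕ → Eucl n), (∀ r, 0 < τ r) ∧ Tendsto τ atTop (𝓝 0) ∧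
    Tendsto w atTop (𝓝 v) ∧ ∀ r, x + τ r • w r ∈ M}

/-- Normal cone `N(M, x) := C(M, x)⁰`. -/
def normalCone (M : Set (Eucl n)) (x : Eucl n) : Set (Eucl n) :=
  negPolar (contingentCone M x)

/-- Weak efficient solution. -/
def WeakEff (f : Fin p → Eucl n → ℝ) (S : Set (Eucl n)) (xh : Eucl n) : Prop :=
  ¬ ∃ x ∈ S, ∀ i, f i x < f i xh

/-- Efficient solution. -/
def Eff (f : Fin p → Eucl n → ℝ) (S : Set (Eucl n)) (xh : Eucl n) : Prop :=
  ¬ ∃ x ∈ S, (∀ i, f i x ≤ f i xh) ∧ ∃ j, f j x < f j xh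

/-- Isolated efficient solution with constant `ν`:
`max_i (f_i(x) − f_i(xh)) ≥ ν‖x − xh‖` on `S`. -/
def IsolatedEff (f : Fin p → Eucl n → ℝ) (S : Set (Eucl n)) (xh : Eucl n) (ν : ℝ) : Prop :=
  ∀ x ∈ S, ∃ i, ν * ‖x - xh‖ ≤ f i x - f i xh

/-- `w ∈ Σ α_i ∂f_i(xh) + Σ_{t ∈ T*} β_t ∂g_t(xh)` with multipliers as described,
where `Nonneg`/`Pos` refers to the sign condition on the `α_i`. -/
def KKTPoint (f : Fin p → Eucl n → ℝ) (g : T → Eucl n → EReal) (xh : Eucl n)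
    (w : Eucl n) : Prop :=
  ∃ (α : Fin p → ℝ) (Ts : Finset T) (β : T → ℝ) (ξ : Fin p → Eucl n) (ζ : T → Eucl n),
    (∀ i, 0 ≤ α i) ∧ ∑ i, α i = 1 ∧ (∀ t ∈ Ts, t ∈ activeIx g xh) ∧
    (∀ t ∈ Ts, 0 ≤ β t) ∧ (∀ i, ξ i ∈ subdiff (f i) xh) ∧
    (∀ t ∈ Ts, ζ t ∈ subdiffE (g t) xh) ∧
    ∑ i, α i • ξ i + ∑ t ∈ Ts, β t • ζ t = w

/-- The weak KKT condition at `xh`. -/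
def WeakKKT (f : Fin p → Eucl n → ℝ) (g : T → Eucl n → EReal) (xh : Eucl n) : Prop :=
  KKTPoint f g xh 0

/-- The strong KKT condition at `xh` (all objective multipliers positive). -/
def StrongKKT (f : Fin p → Eucl n → ℝ) (g : T → Eucl n → EReal) (xh : Eucl n) : Prop :=
  ∃ (α : Fin p → ℝ) (Ts : Finset T) (β : T → ℝ) (ξ : Fin p → Eucl n) (ζ : T → Eucl n),
    (∀ i, 0 < α i) ∧ ∑ i, α i = 1 ∧ (∀ t ∈ Ts, t ∈ activeIx g xh) ∧
    (∀ t ∈ Ts, 0 ≤ β t) ∧ (∀ i, ξ i ∈ subdiff (f i) xh) ∧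
    (∀ t ∈ Ts, ζ t ∈ subdiffE (g t) xh) ∧
    ∑ i, α i • ξ i + ∑ t ∈ Ts, β t • ζ t = 0

/-- The perturbed KKT condition at `xh` with constant `ν`. -/
def PerturbedKKT (f : Fin p → Eucl n → ℝ) (g : T → Eucl n → EReal) (xh : Eucl n)
    (ν : ℝ) : Prop :=
  ∀ w : Eucl n, ‖w‖ ≤ ν → KKTPoint f g xh w

/-- The gap function `ϑ(x, ξ, λ) = sup_{y ∈ S} Σ_i λ_i ⟪ξ_i, x − y⟫`. -/
def gapFn (S : Set (Eucl n)) (x : Eucl n) (ξ : Fin p → Eucl n) (lam : Fin p → ℝ) : EReal :=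
  ⨆ y ∈ S, ((∑ i, lam i * ⟪ξ i, x - y⟫ : ℝ) : EReal)

/-- The unit simplex of multipliers. -/
def simplex (lam : Fin p → ℝ) : Prop := (∀ i, 0 ≤ lam i) ∧ ∑ i, lam i = 1

/-- Supremum (marginal) function `ψ(x) = sup_t g_t(x)`. -/
def supFn (g : T → Eucl n → EReal) (x : Eucl n) : EReal := ⨆ t, g t x

/-- Directional derivative of a convex extended-real-valued function,
`h'(x; d) = inf_{τ > 0} (h(x + τ d) − h(x))/τ` (the limit as `τ ↓ 0`). -/
def dirDeriv (h : Eucl n → EReal) (x d : Eucl n) : EReal :=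
  ⨅ τ ∈ Ioi (0 : ℝ), (h (x + τ • d) - h x) * ((τ⁻¹ : ℝ) : EReal)

/-- Every constraint is (real-valued and) continuously differentiable around `xh`,
with gradient `gr t` at `xh`. -/
def SmoothConstraintsAt (g : T → Eucl n → EReal) (gr : T → Eucl n) (xh : Eucl n) : Prop :=
  ∀ t, ∃ (h : Eucl n → ℝ) (U : Set (Eucl n)), U ∈ 𝓝 xh ∧ (∀ y ∈ U, g t y = (h y : EReal)) ∧
    ContDiffOn ℝ 1 h U ∧ gradient h xh = gr t

/-- Slater CQ. -/
def SCQ (g : T → Eucl n → EReal) : Prop := ∃ x₀ : Eucl n, ∀ t, g t x₀ < 0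

/-- Mangasarian–Fromovitz CQ at `xh`. -/
def MFCQ (g : T → Eucl n → EReal) (xh : Eucl n) : Prop :=
  (GSet g xh).Nonempty ∧ (strictNegPolar (GSet g xh)).Nonempty

/-- Perturbed Mangasarian–Fromovitz CQ at `xh`. -/
def PMFCQ (g : T → Eucl n → EReal) (xh : Eucl n) : Prop :=
  ∃ xs : Eucl n,
    (⨅ ε ∈ Ioi (0 : ℝ), ⨆ ξ ∈ ⋃ t ∈ activeIxEps g xh ε, subdiffE (g t) xh,
      ((⟪ξ, xs⟫ : ℝ) : EReal)) < 0

/-- Local Farkas–Minkowski CQ at `xh`. -/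
def LFMCQ (g : T → Eucl n → EReal) (xh : Eucl n) : Prop :=
  normalCone (feasSet g) xh = coneHull (GSet g xh)

/-- Closed cone CQ at `xh`. -/
def CCCQ (g : T → Eucl n → EReal) (xh : Eucl n) : Prop :=
  IsClosed (coneHull (GSet g xh))

/-- Abadie CQ at `xh`. -/
def ACQ (g : T → Eucl n → EReal) (xh : Eucl n) : Prop :=
  (GSet g xh).Nonempty ∧ negPolar (GSet g xh) ⊆ contingentCone (feasSet g) xh

/-- Kuhn–Tucker CQ at `xh`. -/
def KTCQ (g : T → Eucl n → EReal) (xh : Eucl n) : Prop :=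
  {d | dirDeriv (supFn g) xh d ≤ 0} ⊆ contingentCone (feasSet g) xh

/-- Pshenichnyi–Levin–Valadier CQ at `xh`. -/
def PLVCQ (g : T → Eucl n → EReal) (xh : Eucl n) : Prop :=
  subdiffE (supFn g) xh ⊆ coneHull (GSet g xh)

/-- Weak Abadie DQ at `xh`. -/
def WADQ (f : Fin p → Eucl n → ℝ) (g : T → Eucl n → EReal) (xh : Eucl n) : Prop :=
  (GSet g xh).Nonempty ∧
    strictNegPolar (FSet f xh) ∩ negPolar (GSet g xh) ⊆ contingentCone (feasSet g) xh

/-- The sublevel sets `Q^i(xh)`. -/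
def QSet (f : Fin p → Eucl n → ℝ) (S : Set (Eucl n)) (xh : Eucl n) (i : Fin p) :
    Set (Eucl n) :=
  {x ∈ S | ∀ l, l ≠ i → f l x ≤ f l xh}

/-- Extended Abadie DQ at `xh`. -/
def EADQ (f : Fin p → Eucl n → ℝ) (g : T → Eucl n → EReal) (xh : Eucl n) : Prop :=
  (GSet g xh).Nonempty ∧
    negPolar (FSet f xh) ∩ negPolar (GSet g xh) ⊆
      ⋂ i, contingentCone (QSet f (feasSet g) xh i) xh

/-- Maeda objective qualification at `xh`. -/
def MOQ (f : Fin p → Eucl n → ℝ) (xh : Eucl n) : Prop :=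
  negPolar (FSet f xh) ⊆ {0} ∪ ⋃ i, strictNegPolar (subdiff (f i) xh)


section Aux
variable {n : ℕ}

/-- difference quotient -/
def dq (f : Eucl n → ℝ) (x v : Eucl n) (t : ℝ) : ℝ := (f (x + t • v) - f x) / t

lemma convexOn_line {f : Eucl n → ℝ} (hf : ConvexOn ℝ Set.univ f) (x v : Eucl n) :
    ConvexOn ℝ Set.univ (fun t : ℝ => f (x + t • v)) := by
  refine ⟨convex_univ, ?_⟩
  intro s _ t _ a b ha hb hab
  have h := hf.2 (Set.mem_univ (x + s • v)) (Set.mem_univ (x + t • v)) ha hb hab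
  have hx : a • (x + s • v) + b • (x + t • v) = (a + b) • x + (a • s + b • t) • v := by
    simp only [smul_eq_mul]
    module
  rw [hx, hab, one_smul] at h
  simpa using h

lemma dq_mono {f : Eucl n → ℝ} (hf : ConvexOn ℝ Set.univ f) (x v : Eucl n)
    {s t : ℝ} (hs : 0 < s) (hst : s ≤ t) : dq f x v s ≤ dq f x v t := by
  have h := (convexOn_line hf x v).secant_mono (a := 0) (x := s) (y := t)
    (Set.mem_univ _) (Set.mem_univ _) (Set.mem_univ _) (ne_of_gt hs)
    (ne_of_gt (lt_of_lt_of_le hs hst)) hst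
  simpa [dq] using h

lemma dq_neg {f : Eucl n → ℝ} (hf : ConvexOn ℝ Set.univ f) (x v : Eucl n)
    {s t : ℝ} (hs : 0 < s) (ht : 0 < t) : -dq f x (-v) s ≤ dq f x v t := by
  have h := (convexOn_line hf x v).secant_mono (a := 0) (x := -s) (y := t)
    (Set.mem_univ _) (Set.mem_univ _) (Set.mem_univ _) (by intro h; simp at h; linarith)
    (ne_of_gt ht) (by linarith)
  have hpt : x + (-s) • v = x + s • (-v) := by module
  rw [hpt] at h
  simp only [sub_zero] at h
  rw [div_neg] at h
  simpa [dq] using h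

def ddf (f : Eucl n → ℝ) (x v : Eucl n) : ℝ := sInf (dq f x v '' Set.Ioi 0)

lemma ddf_set_nonempty (f : Eucl n → ℝ) (x v : Eucl n) : (dq f x v '' Set.Ioi 0).Nonempty :=
  ⟨dq f x v 1, 1, by norm_num, rfl⟩

lemma ddf_bddBelow {f : Eucl n → ℝ} (hf : ConvexOn ℝ Set.univ f) (x v : Eucl n) :
    BddBelow (dq f x v '' Set.Ioi 0) := by
  refine ⟨-dq f x (-v) 1, ?_⟩
  rintro _ ⟨t, ht, rfl⟩
  exact dq_neg hf x v one_pos ht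

lemma ddf_le_dq {f : Eucl n → ℝ} (hf : ConvexOn ℝ Set.univ f) (x v : Eucl n)
    {t : ℝ} (ht : 0 < t) : ddf f x v ≤ dq f x v t :=
  csInf_le (ddf_bddBelow hf x v) ⟨t, ht, rfl⟩

lemma ddf_neg_ge {f : Eucl n → ℝ} (hf : ConvexOn ℝ Set.univ f) (x v : Eucl n) :
    -ddf f x v ≤ ddf f x (-v) := by
  refine le_csInf (ddf_set_nonempty f x (-v)) ?_
  rintro _ ⟨s, hs, rfl⟩
  rw [neg_le]
  refine le_csInf (ddf_set_nonempty f x v) ?_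
  rintro _ ⟨t, ht, rfl⟩
  rw [neg_le]
  have := dq_neg hf x v hs ht
  linarith

lemma ddf_zero (f : Eucl n → ℝ) (x : Eucl n) : ddf f x 0 = 0 := by
  have h : dq f x 0 '' Set.Ioi 0 = {0} := by
    have : dq f x (0 : Eucl n) = fun _ => (0:ℝ) := by
      funext t; simp [dq]
    rw [this]
    exact Set.Nonempty.image_const (by exact ⟨1, by norm_num⟩) 0
  rw [ddf, h, csInf_singleton]

lemma dq_smul (f : Eucl n → ℝ) (x v : Eucl n) {c t : ℝ} (hc : 0 < c) :
    dq f x (c • v) t = c * dq f x v (c * t) := by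
  have h1 : x + t • c • v = x + (c * t) • v := by module
  have hc' : c ≠ 0 := ne_of_gt hc
  have ht0 : t = 0 ∨ t ≠ 0 := em _
  rcases ht0 with rfl | ht0
  · simp [dq]
  · rw [dq, dq, h1]
    field_simp

lemma ddf_smul {f : Eucl n → ℝ} (x v : Eucl n) {c : ℝ} (hc : 0 < c) :
    ddf f x (c • v) = c * ddf f x v := by
  have himg : dq f x (c • v) '' Set.Ioi 0 = c • (dq f x v '' Set.Ioi 0) := by
    ext y
    constructor
    · rintro ⟨t, ht, rfl⟩
      exact ⟨dq f x v (c * t), ⟨c * t, by exact mul_pos hc ht, rfl⟩, (dq_smul f x v hc).symm⟩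
    · rintro ⟨q, ⟨t, ht, rfl⟩, rfl⟩
      have ht' : (0:ℝ) < t := ht
      refine ⟨c⁻¹ * t, by exact mul_pos (inv_pos.mpr hc) ht', ?_⟩
      rw [dq_smul f x v hc]
      rw [← mul_assoc, mul_inv_cancel₀ (ne_of_gt hc), one_mul]
      rfl
  rw [ddf, himg, Real.sInf_smul_of_nonneg hc.le]
  rfl

lemma dq_add_le {f : Eucl n → ℝ} (hf : ConvexOn ℝ Set.univ f) (x u v : Eucl n)
    {t : ℝ} (ht : 0 < t) : dq f x (u + v) t ≤ dq f x u (2*t) + dq f x v (2*t) := by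
  have hc := hf.2 (Set.mem_univ (x + (2*t) • u)) (Set.mem_univ (x + (2*t) • v))
    (show (0:ℝ) ≤ 1/2 by norm_num) (show (0:ℝ) ≤ 1/2 by norm_num)
    (show (1/2:ℝ) + 1/2 = 1 by norm_num)
  have hpt : (1/2 : ℝ) • (x + (2*t) • u) + (1/2 : ℝ) • (x + (2*t) • v) = x + t • (u + v) := by
    module
  rw [hpt] at hc
  simp only [smul_eq_mul] at hc
  rw [dq, dq, dq, ← add_div]
  rw [div_le_div_iff₀ ht (by linarith)]
  nlinarith [hc]

lemma ddf_add_le {f : Eucl n → ℝ} (hf : ConvexOn ℝ Set.univ f) (x u v : Eucl n) :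
    ddf f x (u + v) ≤ ddf f x u + ddf f x v := by
  refine le_of_forall_pos_le_add (fun ε hε => ?_)
  obtain ⟨q1, ⟨t1, ht1, rfl⟩, hq1⟩ := exists_lt_of_csInf_lt (ddf_set_nonempty f x u)
    (show sInf (dq f x u '' Set.Ioi 0) < ddf f x u + ε/2 by
      have : (0:ℝ) < ε/2 := by linarith
      unfold ddf; linarith)
  obtain ⟨q2, ⟨t2, ht2, rfl⟩, hq2⟩ := exists_lt_of_csInf_lt (ddf_set_nonempty f x v)
    (show sInf (dq f x v '' Set.Ioi 0) < ddf f x v + ε/2 by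
      have : (0:ℝ) < ε/2 := by linarith
      unfold ddf; linarith)
  have ht1' : (0:ℝ) < t1 := ht1
  have ht2' : (0:ℝ) < t2 := ht2
  set t := min t1 t2 / 2 with hts
  have ht : 0 < t := by positivity
  have h2t1 : 2 * t ≤ t1 := by
    rw [hts]; have := min_le_left t1 t2; linarith
  have h2t2 : 2 * t ≤ t2 := by
    rw [hts]; have := min_le_right t1 t2; linarith
  calc ddf f x (u + v) ≤ dq f x (u + v) t := ddf_le_dq hf x (u+v) ht
    _ ≤ dq f x u (2*t) + dq f x v (2*t) := dq_add_le hf x u v ht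
    _ ≤ dq f x u t1 + dq f x v t2 :=
        add_le_add (dq_mono hf x u (by linarith) h2t1) (dq_mono hf x v (by linarith) h2t2)
    _ ≤ ddf f x u + ddf f x v + ε := by linarith

lemma exists_subgradient {f : Eucl n → ℝ} (hf : ConvexOn ℝ Set.univ f) (x : Eucl n)
    {d : Eucl n} (hd : d ≠ 0) : ∃ ξ ∈ subdiff f x, ⟪ξ, d⟫ = ddf f x d := by
  have hdom : ∀ z : (LinearPMap.mkSpanSingleton (K := ℝ) (L := ℝ) (σ := RingHom.id ℝ) d (ddf f x d) hd).domain,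
      (LinearPMap.mkSpanSingleton (K := ℝ) (L := ℝ) (σ := RingHom.id ℝ) d (ddf f x d) hd) z ≤ ddf f x z := by
    rintro ⟨z, hz⟩
    obtain ⟨c, rfl⟩ := Submodule.mem_span_singleton.mp hz
    have happ : (LinearPMap.mkSpanSingleton (K := ℝ) (L := ℝ) (σ := RingHom.id ℝ) d (ddf f x d) hd) ⟨c • d, hz⟩
        = c • (ddf f x d) := LinearPMap.mkSpanSingleton'_apply _ _ _ c _
    rw [happ]
    simp only [smul_eq_mul]
    rcases lt_trichotomy c 0 with hneg | rfl | hpos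
    · have h1 : c • d = (-c) • (-d) := by module
      rw [h1, ddf_smul x (-d) (by linarith)]
      have h2 := ddf_neg_ge hf x d
      nlinarith
    · simp [ddf_zero]
    · rw [ddf_smul x d hpos]
  obtain ⟨L, hL1, hL2⟩ := exists_extension_of_le_sublinear _ (ddf f x)
    (fun c hc v => ddf_smul x v hc) (ddf_add_le hf x) hdom
  set ξ := (InnerProductSpace.toDual ℝ (Eucl n)).symm (LinearMap.toContinuousLinearMap L) with hξ
  have hξy : ∀ y, ⟪ξ, y⟫ = L y := by
    intro y
    rw [hξ, InnerProductSpace.toDual_symm_apply]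
    simp
  have hddle : ∀ v : Eucl n, ddf f x v ≤ f (x + v) - f x := by
    intro v
    have := ddf_le_dq hf x v one_pos
    simpa [dq] using this
  refine ⟨ξ, ?_, ?_⟩
  · intro y
    have h1 := hL2 (y - x)
    have h2 := hddle (y - x)
    rw [hξy]
    have : x + (y - x) = y := by abel
    rw [this] at h2
    linarith
  · have hself := hL1 ⟨d, Submodule.mem_span_singleton_self d⟩
    rw [LinearPMap.mkSpanSingleton_apply] at hself
    rw [hξy, hself]


lemma ddf_nonneg_of_tangent {f : Eucl n → ℝ} (hf : ConvexOn ℝ Set.univ f)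
    {Q : Set (Eucl n)} {x d : Eucl n} (hQ : ∀ y ∈ Q, f x ≤ f y)
    (hd : d ∈ contingentCone Q x) : 0 ≤ ddf f x d := by
  by_contra hneg
  push_neg at hneg
  obtain ⟨q, ⟨t0, ht0, rfl⟩, hq⟩ := exists_lt_of_csInf_lt (ddf_set_nonempty f x d) hneg
  have ht0' : (0:ℝ) < t0 := ht0
  obtain ⟨τ, w, hτpos, hτ0, hw, hmem⟩ := hd
  have hcont : Continuous f := by
    have := hf.continuousOn isOpen_univ
    rwa [continuousOn_univ] at this
  have hev : ∀ᶠ r in atTop, τ r < t0 := hτ0.eventually (gt_mem_nhds ht0')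
  have hge : ∀ᶠ r in atTop, f x ≤ f (x + t0 • w r) := by
    filter_upwards [hev] with r hr
    have h1 : 0 ≤ dq f x (w r) (τ r) :=
      div_nonneg (sub_nonneg.mpr (hQ _ (hmem r))) (hτpos r).le
    have h2 := h1.trans (dq_mono hf x (w r) (hτpos r) hr.le)
    rw [dq, le_div_iff₀ ht0'] at h2
    linarith
  have hlim : Tendsto (fun r => f (x + t0 • w r)) atTop (𝓝 (f (x + t0 • d))) := by
    apply (hcont.tendsto _).comp
    exact tendsto_const_nhds.add (hw.const_smul t0)
  have hfin : f x ≤ f (x + t0 • d) := ge_of_tendsto hlim hge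
  rw [dq, div_lt_iff₀ ht0'] at hq
  linarith

lemma mem_coneHull_self {M : Set (Eucl n)} {v : Eucl n} (hv : v ∈ M) : v ∈ coneHull M := by
  refine ⟨{v}, fun _ => 1, by simpa, fun _ _ => zero_le_one, by simp⟩

lemma zero_mem_coneHull (M : Set (Eucl n)) : (0 : Eucl n) ∈ coneHull M :=
  ⟨∅, fun _ => 0, by simp, by simp, by simp⟩

lemma coneHull_smul {M : Set (Eucl n)} {x : Eucl n} (hx : x ∈ coneHull M)
    {a : ℝ} (ha : 0 ≤ a) : a • x ∈ coneHull M := by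
  obtain ⟨s, c, hs, hc, rfl⟩ := hx
  refine ⟨s, fun v => a * c v, hs, fun v hv => mul_nonneg ha (hc v hv), ?_⟩
  rw [Finset.smul_sum]
  exact Finset.sum_congr rfl (fun v _ => smul_smul a (c v) v)

lemma coneHull_convex (M : Set (Eucl n)) : Convex ℝ (coneHull M) := by
  classical
  rintro x ⟨s1, c1, hs1, hc1, rfl⟩ y ⟨s2, c2, hs2, hc2, rfl⟩ a b ha hb hab
  refine ⟨s1 ∪ s2, fun v => a * (if v ∈ s1 then c1 v else 0) + b * (if v ∈ s2 then c2 v else 0),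
    ?_, ?_, ?_⟩
  · rw [Finset.coe_union]; exact Set.union_subset hs1 hs2
  · intro v _
    have t1 : (0:ℝ) ≤ if v ∈ s1 then c1 v else 0 := by
      split_ifs with h; exacts [hc1 v h, le_rfl]
    have t2 : (0:ℝ) ≤ if v ∈ s2 then c2 v else 0 := by
      split_ifs with h; exacts [hc2 v h, le_rfl]
    exact add_nonneg (mul_nonneg ha t1) (mul_nonneg hb t2)
  · have e1 : ∑ v ∈ s1 ∪ s2, (if v ∈ s1 then c1 v else 0) • v = ∑ v ∈ s1, c1 v • v := by
      rw [← Finset.sum_subset Finset.subset_union_left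
          (fun v _ hv => by rw [if_neg hv, zero_smul])]
      exact Finset.sum_congr rfl (fun v hv => by rw [if_pos hv])
    have e2 : ∑ v ∈ s1 ∪ s2, (if v ∈ s2 then c2 v else 0) • v = ∑ v ∈ s2, c2 v • v := by
      rw [← Finset.sum_subset Finset.subset_union_right
          (fun v _ hv => by rw [if_neg hv, zero_smul])]
      exact Finset.sum_congr rfl (fun v hv => by rw [if_pos hv])
    simp only []
    rw [← e1, ← e2, Finset.smul_sum, Finset.smul_sum, ← Finset.sum_add_distrib]
    exact Finset.sum_congr rfl (fun v _ => by rw [add_smul, mul_smul, mul_smul])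

lemma coneHull_eq_univ {M : Set (Eucl n)} (hM : negPolar M ⊆ {0}) :
    coneHull M = Set.univ := by
  have hconv := coneHull_convex M
  have hcl : closure (coneHull M) = Set.univ := by
    by_contra hne
    obtain ⟨z, hz⟩ : ∃ z, z ∉ closure (coneHull M) := by
      by_contra h; push_neg at h; exact hne (Set.eq_univ_of_forall h)
    obtain ⟨L, u, hLu, huz⟩ :=
      geometric_hahn_banach_closed_point hconv.closure isClosed_closure hz
    have hu0 : 0 < u := by
      have := hLu 0 (subset_closure (zero_mem_coneHull M))
      simpa using this
    have hL0 : ∀ v ∈ M, L v ≤ 0 := by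
      intro v hv
      by_contra hpos; push_neg at hpos
      have hscale := coneHull_smul (mem_coneHull_self hv)
        (a := 2 * u / L v) (by positivity)
      have h2 := hLu _ (subset_closure hscale)
      rw [map_smul, smul_eq_mul, div_mul_cancel₀ _ (ne_of_gt hpos)] at h2
      linarith
    set ξ := (InnerProductSpace.toDual ℝ (Eucl n)).symm L with hξdef
    have hξ : ξ ∈ negPolar M := by
      intro v hv
      rw [real_inner_comm]
      rw [hξdef, InnerProductSpace.toDual_symm_apply]
      exact hL0 v hv
    have hξ0 : ξ = 0 := hM hξ
    have : L z = 0 := by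
      have := InnerProductSpace.toDual_symm_apply (𝕜 := ℝ) (E := Eucl n) (y := L) (x := z)
      rw [← hξdef, hξ0] at this
      simpa using this.symm
    linarith
  have haff : affineSpan ℝ (coneHull M) = ⊤ := by
    have hcl2 : IsClosed (affineSpan ℝ (coneHull M) : Set (Eucl n)) :=
      (affineSpan ℝ (coneHull M)).closed_of_finiteDimensional
    have hsub : Set.univ ⊆ (affineSpan ℝ (coneHull M) : Set (Eucl n)) := by
      rw [← hcl]
      exact closure_minimal (subset_affineSpan ℝ _) hcl2
    rw [← AffineSubspace.coe_eq_univ_iff]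
    exact Set.eq_univ_of_univ_subset hsub
  obtain ⟨y, hy⟩ := hconv.interior_nonempty_iff_affineSpan_eq_top.mpr haff
  apply Set.eq_univ_of_forall
  intro z
  have hzc : (2:ℝ) • z - y ∈ closure (coneHull M) := by rw [hcl]; trivial
  have hcombo := hconv.combo_interior_closure_mem_interior hy hzc
    (a := 1/2) (b := 1/2) (by norm_num) (by norm_num) (by norm_num)
  have heq : (1/2 : ℝ) • y + (1/2 : ℝ) • ((2:ℝ) • z - y) = z := by module
  rw [heq] at hcombo
  exact interior_subset hcombo

lemma subdiff_convex (f0 : Eucl n → ℝ) (x : Eucl n) : Convex ℝ (subdiff f0 x) := by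
  intro ξ hξ η hη a b ha hb hab
  intro y
  have h1 := hξ y
  have h2 := hη y
  have hinner : ⟪a • ξ + b • η, y - x⟫ = a * ⟪ξ, y - x⟫ + b * ⟪η, y - x⟫ := by
    rw [inner_add_left, real_inner_smul_left, real_inner_smul_left]
  show f0 x + ⟪a • ξ + b • η, y - x⟫ ≤ f0 y
  rw [hinner]
  have e1 := mul_le_mul_of_nonneg_left h1 ha
  have e2 := mul_le_mul_of_nonneg_left h2 hb
  rw [mul_add] at e1 e2
  have e3 : a * f0 y + b * f0 y = f0 y := by rw [← add_mul, hab, one_mul]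
  have e4 : a * f0 x + b * f0 x = f0 x := by rw [← add_mul, hab, one_mul]
  linarith

lemma subdiffE_active_convex {g0 : Eucl n → EReal} {x : Eucl n} (hx : g0 x = 0) :
    Convex ℝ (subdiffE g0 x) := by
  intro ξ hξ η hη a b ha hb hab
  intro y
  have h1 := hξ y
  have h2 := hη y
  rw [hx, zero_add] at h1 h2
  show g0 x + ((⟪a • ξ + b • η, y - x⟫ : ℝ) : EReal) ≤ g0 y
  rw [hx, zero_add]
  have hinner : ⟪a • ξ + b • η, y - x⟫ = a * ⟪ξ, y - x⟫ + b * ⟪η, y - x⟫ := by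
    rw [inner_add_left, real_inner_smul_left, real_inner_smul_left]
  rw [hinner]
  rcases eq_or_ne (g0 y) ⊤ with htop | htop
  · rw [htop]; exact le_top
  · have hbot : g0 y ≠ ⊥ := by
      intro hb'
      rw [hb'] at h1
      exact (EReal.coe_ne_bot _) (le_bot_iff.mp h1)
    rw [← EReal.coe_toReal htop hbot] at h1 h2 ⊢
    rw [EReal.coe_le_coe_iff] at h1 h2 ⊢
    have e1 := mul_le_mul_of_nonneg_left h1 ha
    have e2 := mul_le_mul_of_nonneg_left h2 hb
    have e3 : a * (g0 y).toReal + b * (g0 y).toReal = (g0 y).toReal := by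
      rw [← add_mul, hab, one_mul]
    linarith


lemma Fside {p : ℕ} (f : Fin p → Eucl n → ℝ) (xh : Eucl n)
    (ξ0 : Fin p → Eucl n) (hξ0 : ∀ i, ξ0 i ∈ subdiff (f i) xh) (hp : 1 ≤ p)
    (sF : Finset (Eucl n)) (c : Eucl n → ℝ) (hsF : ∀ v ∈ sF, v ∈ FSet f xh)
    (hc : ∀ v ∈ sF, 0 ≤ c v) :
    ∃ (w : Fin p → ℝ) (η : Fin p → Eucl n), (∀ i, 0 ≤ w i) ∧
      (∀ i, η i ∈ subdiff (f i) xh) ∧ ∑ v ∈ sF, c v • v = ∑ i, w i • η i := by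
  classical
  have hcl : ∀ v, ∃ i : Fin p, v ∈ sF → v ∈ subdiff (f i) xh := by
    intro v
    by_cases hv : v ∈ sF
    · obtain ⟨i, hi⟩ := Set.mem_iUnion.mp (hsF v hv)
      exact ⟨i, fun _ => hi⟩
    · exact ⟨⟨0, hp⟩, fun h => absurd h hv⟩
  choose iF hiF using hcl
  set w : Fin p → ℝ := fun i => ∑ v ∈ sF.filter (fun v => iF v = i), c v with hw
  have hw0 : ∀ i, 0 ≤ w i := fun i =>
    Finset.sum_nonneg (fun v hv => hc v (Finset.mem_filter.mp hv).1)
  set η : Fin p → Eucl n := fun i => if 0 < w i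
    then (sF.filter (fun v => iF v = i)).centerMass c id else ξ0 i with hη
  refine ⟨w, η, hw0, ?_, ?_⟩
  · intro i
    rw [hη]
    dsimp only
    split_ifs with h
    · refine (subdiff_convex (f i) xh).centerMass_mem
        (fun v hv => hc v (Finset.mem_filter.mp hv).1) h ?_
      intro v hv
      obtain ⟨hv1, hv2⟩ := Finset.mem_filter.mp hv
      have := hiF v hv1
      rw [hv2] at this
      exact this
    · exact hξ0 i
  · calc ∑ v ∈ sF, c v • v
        = ∑ i : Fin p, ∑ v ∈ sF.filter (fun v => iF v = i), c v • v :=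
          (Finset.sum_fiberwise_of_maps_to (fun v _ => Finset.mem_univ (iF v)) _).symm
      _ = ∑ i, w i • η i := by
          refine Finset.sum_congr rfl (fun i _ => ?_)
          by_cases h : 0 < w i
          · rw [hη]
            dsimp only
            rw [if_pos h, Finset.centerMass]
            rw [smul_smul, mul_inv_cancel₀ (ne_of_gt h), one_smul]
            simp only [id_eq]
          · have h0 : w i = 0 := le_antisymm (not_lt.mp h) (hw0 i)
            rw [h0, zero_smul]
            refine Finset.sum_eq_zero (fun v hv => ?_)
            have hv0 : c v = 0 := by
              have hsum0 : ∑ v ∈ sF.filter (fun v => iF v = i), c v = 0 := h0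
              exact (Finset.sum_eq_zero_iff_of_nonneg
                (fun v hv => hc v (Finset.mem_filter.mp hv).1)).mp hsum0 v hv
            rw [hv0, zero_smul]

lemma Gside {T : Type*} (g : T → Eucl n → EReal) (xh : Eucl n)
    (sG : Finset (Eucl n)) (c : Eucl n → ℝ)
    (hsG : ∀ v ∈ sG, v ∈ GSet g xh) (hc : ∀ v ∈ sG, 0 ≤ c v) :
    ∃ (Ts : Finset T) (β : T → ℝ) (ζ : T → Eucl n),
      (∀ t ∈ Ts, t ∈ activeIx g xh) ∧ (∀ t ∈ Ts, 0 ≤ β t) ∧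
      (∀ t ∈ Ts, ζ t ∈ subdiffE (g t) xh) ∧
      ∑ v ∈ sG, c v • v = ∑ t ∈ Ts, β t • ζ t := by
  classical
  rcases sG.eq_empty_or_nonempty with rfl | ⟨v0, hv0⟩
  · exact ⟨∅, fun _ => 0, fun _ => 0, by simp, by simp, by simp, by simp⟩
  have hcl : ∀ v, ∃ t : T, v ∈ sG → (t ∈ activeIx g xh ∧ v ∈ subdiffE (g t) xh) := by
    intro v
    by_cases hv : v ∈ sG
    · obtain ⟨t, ht, hvt⟩ := Set.mem_iUnion₂.mp (hsG v hv)
      exact ⟨t, fun _ => ⟨ht, hvt⟩⟩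
    · obtain ⟨t0, ht0, -⟩ := Set.mem_iUnion₂.mp (hsG v0 hv0)
      exact ⟨t0, fun h => absurd h hv⟩
  choose tf htf using hcl
  set β : T → ℝ := fun t => ∑ v ∈ sG.filter (fun v => tf v = t), c v with hβ
  have hβ0 : ∀ t, 0 ≤ β t := fun t =>
    Finset.sum_nonneg (fun v hv => hc v (Finset.mem_filter.mp hv).1)
  set ζ : T → Eucl n := fun t => if 0 < β t
      then (sG.filter (fun v => tf v = t)).centerMass c id
      else if h2 : ∃ v ∈ sG, tf v = t then h2.choose else 0 with hζ
  refine ⟨sG.image tf, β, ζ, ?_, fun t _ => hβ0 t, ?_, ?_⟩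
  · intro t ht
    obtain ⟨v, hv, rfl⟩ := Finset.mem_image.mp ht
    exact (htf v hv).1
  · intro t ht
    obtain ⟨v, hv, hvt⟩ := Finset.mem_image.mp ht
    have hact : g t xh = 0 := by
      have h := (htf v hv).1
      rw [← hvt]
      exact h
    by_cases h : 0 < β t
    · rw [hζ]
      dsimp only
      rw [if_pos h]
      refine (subdiffE_active_convex hact).centerMass_mem
        (fun v' hv' => hc v' (Finset.mem_filter.mp hv').1) h ?_
      intro v' hv'
      obtain ⟨h1', h2'⟩ := Finset.mem_filter.mp hv'
      have := (htf v' h1').2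
      rw [h2'] at this
      exact this
    · have h2 : ∃ v ∈ sG, tf v = t := ⟨v, hv, hvt⟩
      rw [hζ]
      dsimp only
      rw [if_neg h, dif_pos h2]
      obtain ⟨hmem, heq⟩ := h2.choose_spec
      have := (htf _ hmem).2
      rw [heq] at this
      exact this
  · calc ∑ v ∈ sG, c v • v
        = ∑ t ∈ sG.image tf, ∑ v ∈ sG.filter (fun v => tf v = t), c v • v :=
          (Finset.sum_fiberwise_of_maps_to (fun v hv => Finset.mem_image_of_mem tf hv) _).symm
      _ = ∑ t ∈ sG.image tf, β t • ζ t := by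
          refine Finset.sum_congr rfl (fun t _ => ?_)
          by_cases h : 0 < β t
          · rw [hζ]
            dsimp only
            rw [if_pos h, Finset.centerMass]
            rw [smul_smul, mul_inv_cancel₀ (ne_of_gt h), one_smul]
            simp only [id_eq]
          · have h0 : β t = 0 := le_antisymm (not_lt.mp h) (hβ0 t)
            rw [h0, zero_smul]
            refine Finset.sum_eq_zero (fun v hv => ?_)
            have hv0 : c v = 0 := by
              have hsum0 : ∑ v ∈ sG.filter (fun v => tf v = t), c v = 0 := h0
              exact (Finset.sum_eq_zero_iff_of_nonneg
                (fun v hv => hc v (Finset.mem_filter.mp hv).1)).mp hsum0 v hv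
            rw [hv0, zero_smul]

end Aux

variable {n p : ℕ} {T : Type*}

/-- If `x̂ ∈ S` is an efficient solution of `(P)` and both EADQ and MOQ hold
at `x̂`, then the strong KKT condition holds at `x̂`. -/
theorem stmt7
    (hn : 1 ≤ n) (hp : 1 ≤ p)
    (f : Fin p → Eucl n → ℝ) (g : T → Eucl n → EReal)
    (hf : ∀ i, ConvexOn ℝ Set.univ (f i))
    (hgconv : ∀ t, ConvexE (g t))
    (hgproper : ∀ t, ProperE (g t))
    (hglsc : ∀ t, LowerSemicontinuous (g t))
    (xh : Eucl n) (hxS : xh ∈ feasSet g)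
    (heff : Eff f (feasSet g) xh)
    (headq : EADQ f g xh) (hmoq : MOQ f xh) :
    StrongKKT f g xh := by
  classical
  -- a nonzero vector, for subdifferential nonemptiness
  have hd0ne : (EuclideanSpace.single (⟨0, hn⟩ : Fin n) (1:ℝ)) ≠ 0 := by
    intro h
    have h1 : (EuclideanSpace.single (⟨0, hn⟩ : Fin n) (1:ℝ)) ⟨0, hn⟩ = (0 : Eucl n) ⟨0, hn⟩ := by rw [h]
    rw [EuclideanSpace.single_apply] at h1
    simp at h1
  -- base subgradients
  have hsubne : ∀ i, ∃ ξ, ξ ∈ subdiff (f i) xh := by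
    intro i
    obtain ⟨ξ, hξ, -⟩ := exists_subgradient (hf i) xh hd0ne
    exact ⟨ξ, hξ⟩
  choose ξ0 hξ0 using hsubne
  -- Step 1: F⁰ ∩ G⁰ = {0}
  have key : ∀ d, d ∈ negPolar (FSet f xh) → d ∈ negPolar (GSet g xh) → d = 0 := by
    intro d hdF hdG
    by_cases hd0 : d = 0
    · exact hd0
    rcases hmoq hdF with h0 | hstrict
    · exact h0
    exfalso
    obtain ⟨i, hi⟩ := Set.mem_iUnion.mp hstrict
    have htan : d ∈ contingentCone (QSet f (feasSet g) xh i) xh :=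
      Set.mem_iInter.mp (headq.2 ⟨hdF, hdG⟩) i
    have hQ : ∀ y ∈ QSet f (feasSet g) xh i, f i xh ≤ f i y := by
      intro y hy
      by_contra hlt
      push_neg at hlt
      refine heff ⟨y, hy.1, ?_, ⟨i, hlt⟩⟩
      intro l
      by_cases hl : l = i
      · rw [hl]; exact hlt.le
      · exact hy.2 l hl
    have hdd := ddf_nonneg_of_tangent (hf i) hQ htan
    obtain ⟨ξ, hξ, hξd⟩ := exists_subgradient (hf i) xh hd0
    have hlt := hi ξ hξ
    rw [hξd] at hlt
    linarith
  have hpolar : negPolar (FSet f xh ∪ GSet g xh) ⊆ ({0} : Set (Eucl n)) := by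
    intro d hd
    exact key d (fun ξ hξ => hd ξ (Or.inl hξ)) (fun ξ hξ => hd ξ (Or.inr hξ))
  have hcone := coneHull_eq_univ hpolar
  have hmem : (-(∑ i, ξ0 i)) ∈ coneHull (FSet f xh ∪ GSet g xh) := by
    rw [hcone]; trivial
  obtain ⟨s, c, hsM, hc0, hsum⟩ := hmem
  set sF := s.filter (fun v => v ∈ FSet f xh) with hsFdef
  set sG := s.filter (fun v => v ∉ FSet f xh) with hsGdef
  have hsplit : ∑ v ∈ sF, c v • v + ∑ v ∈ sG, c v • v = ∑ v ∈ s, c v • v :=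
    Finset.sum_filter_add_sum_filter_not s _ _
  obtain ⟨w, η, hw0, hη, hFsum⟩ := Fside f xh ξ0 hξ0 hp sF c
    (fun v hv => (Finset.mem_filter.mp hv).2)
    (fun v hv => hc0 v (Finset.mem_filter.mp hv).1)
  obtain ⟨Ts, β, ζ, hTs, hβ0, hζ, hGsum⟩ := Gside g xh sG c
    (fun v hv => by
      obtain ⟨h1, h2⟩ := Finset.mem_filter.mp hv
      rcases hsM (Finset.mem_coe.mpr h1) with h | h
      · exact absurd h h2
      · exact h)
    (fun v hv => hc0 v (Finset.mem_filter.mp hv).1)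
  have htotal : ∑ i, (ξ0 i + w i • η i) + ∑ t ∈ Ts, β t • ζ t = 0 := by
    rw [Finset.sum_add_distrib]
    rw [add_assoc, ← hFsum, ← hGsum, hsplit, ← hsum]
    abel
  have h1w : ∀ i, (0:ℝ) < 1 + w i := fun i => by linarith [hw0 i]
  set σ : ℝ := ∑ i, (1 + w i) with hσ
  have hσpos : 0 < σ := by
    refine Finset.sum_pos (fun i _ => h1w i) ⟨⟨0, hp⟩, Finset.mem_univ _⟩
  set μ : Fin p → Eucl n := fun i => (1 + w i)⁻¹ • (ξ0 i + w i • η i) with hμ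
  have hμmem : ∀ i, μ i ∈ subdiff (f i) xh := by
    intro i
    have hpos := h1w i
    have hwnn := hw0 i
    have hcomb := (subdiff_convex (f i) xh) (hξ0 i) (hη i)
      (show (0:ℝ) ≤ (1 + w i)⁻¹ by positivity)
      (show (0:ℝ) ≤ w i * (1 + w i)⁻¹ by positivity)
      (show (1 + w i)⁻¹ + w i * (1 + w i)⁻¹ = 1 by
        field_simp)
    have heq : (1 + w i)⁻¹ • ξ0 i + (w i * (1 + w i)⁻¹) • η i = μ i := by
      rw [hμ]
      dsimp only
      rw [smul_add, smul_smul, mul_comm]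
    rw [heq] at hcomb
    exact hcomb
  refine ⟨fun i => (1 + w i) / σ, Ts, fun t => β t / σ, μ, ζ, ?_, ?_, hTs, ?_, hμmem, hζ, ?_⟩
  · intro i
    exact div_pos (h1w i) hσpos
  · rw [← Finset.sum_div, ← hσ]
    exact div_self (ne_of_gt hσpos)
  · intro t ht
    exact div_nonneg (hβ0 t ht) hσpos.le
  · have e1 : ∀ i, ((1 + w i) / σ) • μ i = σ⁻¹ • ((1 + w i) • μ i) := by
      intro i
      rw [div_eq_mul_inv, mul_comm, mul_smul]
    have e2 : ∀ t, (β t / σ) • ζ t = σ⁻¹ • (β t • ζ t) := by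
      intro t
      rw [div_eq_mul_inv, mul_comm, mul_smul]
    have e3 : ∀ i, (1 + w i) • μ i = ξ0 i + w i • η i := by
      intro i
      rw [hμ]
      dsimp only
      rw [smul_inv_smul₀ (ne_of_gt (h1w i))]
    calc ∑ i, ((1 + w i) / σ) • μ i + ∑ t ∈ Ts, (β t / σ) • ζ t
        = σ⁻¹ • (∑ i, (ξ0 i + w i • η i) + ∑ t ∈ Ts, β t • ζ t) := by
          rw [smul_add, Finset.smul_sum, Finset.smul_sum]
          congr 1
          · exact Finset.sum_congr rfl (fun i _ => by rw [e1 i, e3 i])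
          · exact Finset.sum_congr rfl (fun t _ => e2 t)
      _ = 0 := by rw [htotal, smul_zero]

end MOSIP
end
end

section
/- If x̂ ∈ S and ϑ(x̂, ξ, λ) = 0 for some ξ = (ξ_1, …, ξ_p) with ξ_i ∈ ∂f_i(x̂) for each i and some λ in the unit simplex with λ_i > 0 for all i, then x̂ is an efficient solution of (P). -/
open Set Filter Topology
open scoped RealInnerProductSpace Pointwise

noncomputable section

namespace MOSIP

variable {n : ℕ} {T : Type*} {p : ℕ}

variable {n p : ℕ} {T : Type*}

/-- If `x̂ ∈ S` and `ϑ(x̂, ξ, λ) = 0` for some `ξ` with `ξ_i ∈ ∂f_i(x̂)` and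
some `λ` in the unit simplex with all `λ_i > 0`, then `x̂` is an efficient solution of `(P)`. -/
theorem stmt9
    (hn : 1 ≤ n) (hp : 1 ≤ p)
    (f : Fin p → Eucl n → ℝ) (g : T → Eucl n → EReal)
    (hf : ∀ i, ConvexOn ℝ Set.univ (f i))
    (hgconv : ∀ t, ConvexE (g t))
    (hgproper : ∀ t, ProperE (g t))
    (hglsc : ∀ t, LowerSemicontinuous (g t))
    (xh : Eucl n) (hxS : xh ∈ feasSet g)
    (ξ : Fin p → Eucl n) (hξ : ∀ i, ξ i ∈ subdiff (f i) xh)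
    (lam : Fin p → ℝ) (hlam : simplex lam) (hpos : ∀ i, 0 < lam i)
    (hgap : gapFn (feasSet g) xh ξ lam = 0) :
    Eff f (feasSet g) xh := by
  rintro ⟨x, hxS', hle, j, hj⟩
  -- From gap = 0: the term at y = x is ≤ 0.
  have hterm : ((∑ i, lam i * ⟪ξ i, xh - x⟫ : ℝ) : EReal) ≤ 0 := by
    rw [← hgap]
    exact le_iSup₂ (f := fun y (_ : y ∈ feasSet g) =>
      ((∑ i, lam i * ⟪ξ i, xh - y⟫ : ℝ) : EReal)) x hxS'
  have hterm' : (∑ i, lam i * ⟪ξ i, xh - x⟫ : ℝ) ≤ 0 := by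
    exact_mod_cast hterm
  -- Subgradient inequality: ⟪ξ i, x - xh⟫ ≤ f i x - f i xh
  have hsub : ∀ i, ⟪ξ i, x - xh⟫ ≤ f i x - f i xh := fun i => by
    have := hξ i x; linarith
  -- Σ λ_i (f_i x - f_i xh) < 0
  have hsum_lt : (∑ i, lam i * (f i x - f i xh)) < 0 := by
    have h1 : ∀ i, lam i * (f i x - f i xh) ≤ 0 := fun i =>
      mul_nonpos_of_nonneg_of_nonpos (hpos i).le (by linarith [hle i])
    have h2 : lam j * (f j x - f j xh) < 0 :=
      mul_neg_of_pos_of_neg (hpos j) (by linarith)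
    calc (∑ i, lam i * (f i x - f i xh)) < ∑ _i : Fin p, (0 : ℝ) := by
          apply Finset.sum_lt_sum (fun i _ => h1 i) ⟨j, Finset.mem_univ j, h2⟩
      _ = 0 := by simp
  -- but Σ λ_i ⟪ξ i, x - xh⟫ ≥ 0 since -(Σ λ_i ⟪ξ_i, xh - x⟫) ≥ 0
  have hkey : 0 ≤ ∑ i, lam i * ⟪ξ i, x - xh⟫ := by
    have : ∀ i, lam i * ⟪ξ i, x - xh⟫ = -(lam i * ⟪ξ i, xh - x⟫) := fun i => by
      rw [show x - xh = -(xh - x) by abel, inner_neg_right]; ring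
    simp only [this, Finset.sum_neg_distrib]
    linarith
  have : (∑ i, lam i * ⟪ξ i, x - xh⟫) ≤ ∑ i, lam i * (f i x - f i xh) :=
    Finset.sum_le_sum fun i _ => mul_le_mul_of_nonneg_left (hsub i) (hpos i).le
  linarith

end MOSIP
end
end

section
/- If the perturbed KKT condition holds at x̂ ∈ S with constant ν > 0, then x̂ is an isolated efficient solution of (P) with constant ν. -/
open Set Filter Topology
open scoped RealInnerProductSpace Pointwise

noncomputable section

namespace MOSIP

variable {n : ℕ} {T : Type*} {p : ℕ}

variable {n p : ℕ} {T : Type*}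

/-- If the perturbed KKT condition holds at `x̂ ∈ S` with constant `ν > 0`,
then `x̂` is an isolated efficient solution of `(P)` with constant `ν`. -/
theorem stmt13
    (hn : 1 ≤ n) (hp : 1 ≤ p)
    (f : Fin p → Eucl n → ℝ) (g : T → Eucl n → EReal)
    (hf : ∀ i, ConvexOn ℝ Set.univ (f i))
    (hgconv : ∀ t, ConvexE (g t))
    (hgproper : ∀ t, ProperE (g t))
    (hglsc : ∀ t, LowerSemicontinuous (g t))
    (xh : Eucl n) (hxS : xh ∈ feasSet g)
    (ν : ℝ) (hν : 0 < ν)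
    (hpkkt : PerturbedKKT f g xh ν) :
    IsolatedEff f (feasSet g) xh ν := by
  intro x hx
  rcases eq_or_ne x xh with rfl | hne
  · exact ⟨⟨0, hp⟩, by simp⟩
  · have hd : x - xh ≠ 0 := sub_ne_zero.mpr hne
    have hdn : (0:ℝ) < ‖x - xh‖ := norm_pos_iff.mpr hd
    set w : Eucl n := (ν / ‖x - xh‖) • (x - xh) with hw
    have hwnorm : ‖w‖ = ν := by
      rw [hw, norm_smul, Real.norm_eq_abs, abs_of_pos (div_pos hν hdn),
        div_mul_cancel₀ _ hdn.ne']
    obtain ⟨α, Ts, β, ξ, ζ, hα, hαsum, hTs, hβ, hξ, hζ, hsum⟩ := hpkkt w hwnorm.le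
    have hwin : ⟪w, x - xh⟫ = ν * ‖x - xh‖ := by
      rw [hw, real_inner_smul_left, real_inner_self_eq_norm_sq]
      field_simp
    have hξle : ∀ i, ⟪ξ i, x - xh⟫ ≤ f i x - f i xh := by
      intro i
      have := hξ i x
      linarith
    have hζle : ∀ t ∈ Ts, ⟪ζ t, x - xh⟫ ≤ 0 := by
      intro t ht
      have h1 := hζ t ht x
      have h2 : g t xh = 0 := hTs t ht
      rw [h2, zero_add] at h1
      have h3 : ((⟪ζ t, x - xh⟫ : ℝ) : EReal) ≤ ((0:ℝ) : EReal) := by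
        refine le_trans h1 ?_
        simpa using hx t
      exact_mod_cast h3
    have hexp : ⟪w, x - xh⟫ = ∑ i, α i * ⟪ξ i, x - xh⟫ + ∑ t ∈ Ts, β t * ⟪ζ t, x - xh⟫ := by
      rw [← hsum, inner_add_left, sum_inner, sum_inner]
      simp only [real_inner_smul_left]
    have key : ν * ‖x - xh‖ ≤ ∑ i, α i * (f i x - f i xh) := by
      rw [← hwin, hexp]
      have h1 : ∑ t ∈ Ts, β t * ⟪ζ t, x - xh⟫ ≤ 0 := by
        apply Finset.sum_nonpos
        intro t ht
        exact mul_nonpos_of_nonneg_of_nonpos (hβ t ht) (hζle t ht)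
      have h2 : ∑ i, α i * ⟪ξ i, x - xh⟫ ≤ ∑ i, α i * (f i x - f i xh) :=
        Finset.sum_le_sum fun i _ => mul_le_mul_of_nonneg_left (hξle i) (hα i)
      linarith
    have hne' : (Finset.univ : Finset (Fin p)).Nonempty := by
      have : Nonempty (Fin p) := ⟨⟨0, hp⟩⟩
      exact Finset.univ_nonempty
    obtain ⟨i, _, hi⟩ := Finset.exists_max_image Finset.univ (fun i => f i x - f i xh) hne'
    refine ⟨i, key.trans ?_⟩
    calc ∑ j, α j * (f j x - f j xh) ≤ ∑ j, α j * (f i x - f i xh) :=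
          Finset.sum_le_sum fun j _ => mul_le_mul_of_nonneg_left (hi j (Finset.mem_univ j)) (hα j)
      _ = f i x - f i xh := by rw [← Finset.sum_mul, hαsum, one_mul]

end MOSIP
end
end
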